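/- The formal power series product ∏_{j≥1} Σ_{k≥0} (x^k/k!)^j, when expanded, has coefficient of x^n equal to (1/n!) · Σ over integer partitions i of n of n!/∏_{j=1}^{d(i)} (m(i,j)!)^j; i.e., it is the exponential generating function of the sequence a_n = Σ_{i=1}^{p(n)} n!/∏_j (m(i,j)!)^j. -/

import Mathlib

/-- `m(i,j)`: the multiplicity of the part of size `j` in the partition `i`. -/
def Nat.Partition.mult {n : ℕ} (i : n.Partition) (j : ℕ) : ℕ :=
  Multiset.count j i.parts

/-- `d(i)`: the largest part of the partition `i`. -/
def Nat.Partition.dmax {n : ℕ} (i : n.Partition) : ℕ :=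
  i.parts.toFinset.sup id

/-- The factor `Σ_{k≥0} (x^k/k!)^j = Σ_{k≥0} x^{jk}/(k!)^j` of the generating
function, as a formal power series over `ℚ`. -/
noncomputable def egfFactor (j : ℕ) : PowerSeries ℚ :=
  PowerSeries.mk fun m =>
    if j ∣ m then ((1 : ℚ) / (m / j).factorial) ^ j else 0

open Finset

lemma part_le_aux {n : ℕ} (i : n.Partition) {j : ℕ} (hj : j ∈ i.parts) : j ≤ n := by
  have := Multiset.single_le_sum (fun x _ => Nat.zero_le x) j hj
  simpa [i.parts_sum] using this

lemma dmax_le_aux {n : ℕ} (i : n.Partition) : i.dmax ≤ n :=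
  Finset.sup_le fun j hj => part_le_aux i (Multiset.mem_toFinset.1 hj)

lemma mult_eq_zero_of_gt_aux {n : ℕ} (i : n.Partition) {j : ℕ} (hj : i.dmax < j) :
    i.mult j = 0 := by
  rw [Nat.Partition.mult, Multiset.count_eq_zero]
  intro h
  exact absurd (Finset.le_sup (f := id) (Multiset.mem_toFinset.2 h)) (by simpa [Nat.Partition.dmax] using hj.not_ge)

/-- The partition associated to a finitely supported multiplicity function. -/
def partOfAux (n N : ℕ) (l : ℕ →₀ ℕ) (hdvd : ∀ j ∈ Icc 1 N, j ∣ l j)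
    (hsum : ∑ j ∈ Icc 1 N, l j = n) : n.Partition where
  parts := ∑ j ∈ Icc 1 N, Multiset.replicate (l j / j) j
  parts_pos := by
    intro a ha
    rw [Multiset.mem_sum] at ha
    obtain ⟨j, hj, haj⟩ := ha
    rw [Multiset.eq_of_mem_replicate haj]
    exact (Finset.mem_Icc.1 hj).1
  parts_sum := by
    calc (∑ j ∈ Icc 1 N, Multiset.replicate (l j / j) j).sum
        = ∑ j ∈ Icc 1 N, (Multiset.replicate (l j / j) j).sum :=
          map_sum Multiset.sumAddMonoidHom _ _
      _ = n := by
          simp only [Multiset.sum_replicate, smul_eq_mul]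
          rw [← hsum]
          exact Finset.sum_congr rfl fun j hj => Nat.div_mul_cancel (hdvd j hj)

lemma mult_partOfAux (n N : ℕ) (l : ℕ →₀ ℕ) (hdvd : ∀ j ∈ Icc 1 N, j ∣ l j)
    (hsum : ∑ j ∈ Icc 1 N, l j = n) (j : ℕ) :
    (partOfAux n N l hdvd hsum).mult j = if j ∈ Icc 1 N then l j / j else 0 := by
  simp only [Nat.Partition.mult, partOfAux, Multiset.count_sum', Multiset.count_replicate]
  rw [Finset.sum_ite_eq' (Icc 1 N) j (fun j' => l j' / j')]

lemma dvd_of_term_ne_zero {N : ℕ} {l : ℕ →₀ ℕ}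
    (hne : ∏ j ∈ Icc 1 N, (PowerSeries.coeff (R := ℚ) (l j)) (egfFactor j) ≠ 0) :
    ∀ j ∈ Icc 1 N, j ∣ l j := by
  intro j hj
  have h := Finset.prod_ne_zero_iff.1 hne j hj
  by_contra hd
  simp [egfFactor, PowerSeries.coeff_mk, hd] at h

lemma sum_of_mem_aux {n N : ℕ} {l : ℕ →₀ ℕ} (hl : l ∈ finsuppAntidiag (Icc 1 N) n) :
    ∑ j ∈ Icc 1 N, l j = n := (mem_finsuppAntidiag.1 hl).1

theorem egf_coeff_BPn0 (n N : ℕ) (hN : n ≤ N) :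
    PowerSeries.coeff (R := ℚ) n (∏ j ∈ Icc 1 N, egfFactor j) =
    ((n.factorial : ℚ))⁻¹ *
      ∑ i : n.Partition,
        (n.factorial : ℚ) /
          ∏ j ∈ Icc 1 i.dmax, ((i.mult j).factorial : ℚ) ^ j := by
  classical
  have hfact : (n.factorial : ℚ) ≠ 0 := Nat.cast_ne_zero.2 n.factorial_ne_zero
  have hRHS : ((n.factorial : ℚ))⁻¹ *
      (∑ i : n.Partition, (n.factorial : ℚ) /
        ∏ j ∈ Icc 1 i.dmax, ((i.mult j).factorial : ℚ) ^ j)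
      = ∑ i : n.Partition, ∏ j ∈ Icc 1 N, (((i.mult j).factorial : ℚ))⁻¹ ^ j := by
    rw [Finset.mul_sum]
    refine Finset.sum_congr rfl fun i _ => ?_
    have hsub : Icc 1 i.dmax ⊆ Icc 1 N := Finset.Icc_subset_Icc_right ((dmax_le_aux i).trans hN)
    have hP : ∏ j ∈ Icc 1 i.dmax, ((i.mult j).factorial : ℚ) ^ j
        = ∏ j ∈ Icc 1 N, ((i.mult j).factorial : ℚ) ^ j := by
      refine Finset.prod_subset hsub fun j hj hj' => ?_
      have h1 : 1 ≤ j := (Finset.mem_Icc.1 hj).1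
      have hlt : i.dmax < j := by
        by_contra h
        exact hj' (Finset.mem_Icc.2 ⟨h1, not_lt.1 h⟩)
      rw [mult_eq_zero_of_gt_aux i hlt]; simp
    rw [div_eq_mul_inv, ← mul_assoc, inv_mul_cancel₀ hfact, one_mul, hP,
      ← Finset.prod_inv_distrib]
    exact Finset.prod_congr rfl fun j _ => (inv_pow _ _).symm
  rw [hRHS, PowerSeries.coeff_prod]
  refine Finset.sum_bij_ne_zero
    (fun l hl hne => partOfAux n N l (dvd_of_term_ne_zero hne) (sum_of_mem_aux hl))
    (fun _ _ _ => Finset.mem_univ _) ?_ ?_ ?_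
  · -- injectivity
    intro a₁ h₁₁ h₁₂ a₂ h₂₁ h₂₂ hEq
    ext j
    by_cases hj : j ∈ Icc 1 N
    · have := congrArg (fun p => p.mult j) hEq
      simp only [mult_partOfAux, hj, if_pos] at this
      have d₁ := dvd_of_term_ne_zero h₁₂ j hj
      have d₂ := dvd_of_term_ne_zero h₂₂ j hj
      calc a₁ j = a₁ j / j * j := (Nat.div_mul_cancel d₁).symm
        _ = a₂ j / j * j := by rw [this]
        _ = a₂ j := Nat.div_mul_cancel d₂
    · have s₁ := (mem_finsuppAntidiag.1 h₁₁).2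
      have s₂ := (mem_finsuppAntidiag.1 h₂₁).2
      rw [Finsupp.notMem_support_iff.1 (fun h => hj (s₁ h)),
        Finsupp.notMem_support_iff.1 (fun h => hj (s₂ h))]
  · -- surjectivity
    intro b _ _
    have hmem : ∀ j, j * b.mult j ≠ 0 → j ∈ Icc 1 N := by
      intro j hj
      have hjm : j ∈ b.parts := by
        rw [← Multiset.count_pos, ← Nat.Partition.mult]
        rcases Nat.eq_zero_or_pos (b.mult j) with h | h
        · exact absurd (by rw [h, mul_zero]) hj
        · exact h
      exact Finset.mem_Icc.2 ⟨b.parts_pos hjm, (part_le_aux b hjm).trans hN⟩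
    set l : ℕ →₀ ℕ := Finsupp.onFinset (Icc 1 N) (fun j => j * b.mult j) hmem with hldef
    have hlapp : ∀ j, l j = j * b.mult j := fun j => rfl
    have hlsum : ∑ j ∈ Icc 1 N, l j = n := by
      have hsubset : b.parts.toFinset ⊆ Icc 1 N := by
        intro j hj
        have hjm := Multiset.mem_toFinset.1 hj
        exact Finset.mem_Icc.2 ⟨b.parts_pos hjm, (part_le_aux b hjm).trans hN⟩
      have key : ∑ j ∈ Icc 1 N, j * b.mult j = ∑ j ∈ b.parts.toFinset, j * b.mult j := by
        refine (Finset.sum_subset hsubset fun j _ hj' => ?_).symm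
        have : b.mult j = 0 := by
          rw [Nat.Partition.mult, Multiset.count_eq_zero]
          exact fun h => hj' (Multiset.mem_toFinset.2 h)
        rw [this, mul_zero]
      have key2 : ∑ j ∈ b.parts.toFinset, j * b.mult j = b.parts.sum := by
        conv_rhs => rw [← Multiset.toFinset_sum_count_nsmul_eq b.parts]
        calc ∑ j ∈ b.parts.toFinset, j * b.mult j
            = ∑ j ∈ b.parts.toFinset, (Multiset.count j b.parts • ({j} : Multiset ℕ)).sum := by
              refine Finset.sum_congr rfl fun j _ => ?_
              simp [Nat.Partition.mult, Multiset.nsmul_singleton, Multiset.sum_replicate,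
                mul_comm]
          _ = (∑ j ∈ b.parts.toFinset, Multiset.count j b.parts • ({j} : Multiset ℕ)).sum :=
              (map_sum Multiset.sumAddMonoidHom _ _).symm
      simp only [hlapp]
      rw [key, key2, b.parts_sum]
    have hlmem : l ∈ finsuppAntidiag (Icc 1 N) n :=
      mem_finsuppAntidiag.2 ⟨hlsum, Finsupp.support_onFinset_subset⟩
    have hldvd : ∀ j ∈ Icc 1 N, j ∣ l j := fun j _ => ⟨b.mult j, hlapp j⟩
    have hlne : ∏ j ∈ Icc 1 N, (PowerSeries.coeff (R := ℚ) (l j)) (egfFactor j) ≠ 0 := by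
      rw [Finset.prod_ne_zero_iff]
      intro j hj
      have h1 : 1 ≤ j := (Finset.mem_Icc.1 hj).1
      simp only [egfFactor, PowerSeries.coeff_mk, if_pos (hldvd j hj)]
      positivity
    refine ⟨l, hlmem, hlne, ?_⟩
    ext1
    ext j
    rw [← Nat.Partition.mult, ← Nat.Partition.mult, mult_partOfAux]
    by_cases hj : j ∈ Icc 1 N
    · rw [if_pos hj, hlapp j,
        Nat.mul_div_cancel_left _ (Nat.lt_of_lt_of_le Nat.zero_lt_one (Finset.mem_Icc.1 hj).1)]
    · rw [if_neg hj]
      symm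
      rw [Nat.Partition.mult, Multiset.count_eq_zero]
      intro h
      exact hj (Finset.mem_Icc.2 ⟨b.parts_pos h, (part_le_aux b h).trans hN⟩)
  · -- values agree
    intro l hl hne
    refine Finset.prod_congr rfl fun j hj => ?_
    have hd := dvd_of_term_ne_zero hne j hj
    rw [mult_partOfAux, if_pos hj]
    simp [egfFactor, PowerSeries.coeff_mk, if_pos hd, one_div]
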